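/- Let (X,d) be a compact metric space, S a closed subset of X, and c > 0; for xi > 0 write S_xi = { x in X : dist(x,S) <= xi }. Let T : X -> X be a Borel measurable injective map that is continuous at every point of X \ S, and let M_{S,c} denote the set of Borel probability measures nu on X such that nu(S_xi) <= c*xi for all xi > 0. Let nu_0 be a Borel probability measure such that the averages nu_bar_n := (1/n) * sum_{i=0}^{n-1} (T^i)_* nu_0 belong to M_{S,c} for every n >= 1. Then any weak* accumulation point mu of the sequence (nu_bar_n) satisfies T_* mu = mu and mu belongs to M_{S,c}; in particular, T admits an invariant Borel probability measure mu with mu(S_xi) <= c*xi for all xi > 0. -/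

import Mathlib

open Set MeasureTheory Filter

/- STATEMENT 5: Krylov–Bogolyubov with a singularity set: any weak* accumulation point μ of
   the averages ν̄_n = (1/n) ∑_{i<n} (T^i)_* ν₀, all lying in M_{S,c}, is T-invariant and
   lies in M_{S,c}; in particular T admits an invariant probability measure in M_{S,c}. -/
theorem stmt_5 {X : Type*} [MetricSpace X] [CompactSpace X]
    [MeasurableSpace X] [BorelSpace X]
    (S : Set X) (hS : IsClosed S) (c : ℝ) (hc : 0 < c)
    (T : X → X) (hTmeas : Measurable T) (hTinj : Function.Injective T)
    (hTcont : ∀ x ∉ S, ContinuousAt T x)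
    (ν₀ : Measure X) [IsProbabilityMeasure ν₀]
    (νbar : ℕ → Measure X)
    (hνbar : ∀ n : ℕ, 1 ≤ n →
      νbar n = (n : ENNReal)⁻¹ • ∑ i ∈ Finset.range n, ν₀.map (T^[i]))
    (hM : ∀ n : ℕ, 1 ≤ n → ∀ ξ : ℝ, 0 < ξ →
      νbar n {x | Metric.infDist x S ≤ ξ} ≤ ENNReal.ofReal (c * ξ))
    (μ : Measure X) [IsProbabilityMeasure μ]
    (φ : ℕ → ℕ) (hφ : StrictMono φ) (hφ1 : ∀ k, 1 ≤ φ k)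
    (hconv : ∀ f : C(X, ℝ),
      Tendsto (fun k => ∫ x, f x ∂(νbar (φ k))) atTop (nhds (∫ x, f x ∂μ))) :
    (μ.map T = μ ∧
      ∀ ξ : ℝ, 0 < ξ → μ {x | Metric.infDist x S ≤ ξ} ≤ ENNReal.ofReal (c * ξ)) ∧
    ∃ μ' : Measure X, IsProbabilityMeasure μ' ∧ μ'.map T = μ' ∧
      ∀ ξ : ℝ, 0 < ξ → μ' {x | Metric.infDist x S ≤ ξ} ≤ ENNReal.ofReal (c * ξ) := by
  have hiter : ∀ i : ℕ, Measurable (T^[i]) := fun i => hTmeas.iterate i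
  have hFmeas : ∀ ξ : ℝ, MeasurableSet {x : X | Metric.infDist x S ≤ ξ} := fun ξ =>
    (isClosed_le (Metric.continuous_infDist_pt S) continuous_const).measurableSet
  -- νbar n is a probability measure for n ≥ 1
  have hprob : ∀ n : ℕ, 1 ≤ n → IsProbabilityMeasure (νbar n) := by
    intro n hn
    rw [hνbar n hn]
    constructor
    simp only [Measure.smul_apply, Measure.coe_finset_sum, Finset.sum_apply, smul_eq_mul]
    have h1 : ∀ i ∈ Finset.range n, (ν₀.map (T^[i])) univ = 1 := by
      intro i _
      haveI : IsProbabilityMeasure (ν₀.map (T^[i])) :=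
        Measure.isProbabilityMeasure_map (hiter i).aemeasurable
      exact measure_univ
    rw [Finset.sum_congr rfl h1, Finset.sum_const, Finset.card_range, nsmul_eq_mul, mul_one,
      ENNReal.inv_mul_cancel (by exact_mod_cast (by omega : n ≠ 0)) (ENNReal.natCast_ne_top n)]
  -- bounded measurable functions are integrable against finite measures
  have hbdd_int : ∀ (g : X → ℝ), Measurable g → ∀ C : ℝ, (∀ x, ‖g x‖ ≤ C) →
      ∀ (ν : Measure X), IsFiniteMeasure ν → Integrable g ν := by
    intro g hg C hC ν hν
    exact ⟨hg.aestronglyMeasurable, HasFiniteIntegral.of_bounded (ae_of_all _ hC)⟩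
  -- integral against νbar n
  have havg : ∀ n : ℕ, 1 ≤ n → ∀ (g : X → ℝ), Measurable g → ∀ C : ℝ, (∀ x, ‖g x‖ ≤ C) →
      ∫ x, g x ∂(νbar n) = (n : ℝ)⁻¹ * ∑ i ∈ Finset.range n, ∫ x, g (T^[i] x) ∂ν₀ := by
    intro n hn g hg C hC
    have hint : ∀ i ∈ Finset.range n, Integrable g (ν₀.map (T^[i])) := by
      intro i _
      haveI : IsProbabilityMeasure (ν₀.map (T^[i])) :=
        Measure.isProbabilityMeasure_map (hiter i).aemeasurable
      exact hbdd_int g hg C hC _ inferInstance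
    rw [hνbar n hn, integral_smul_measure, integral_finset_sum_measure hint, smul_eq_mul]
    congr 1
    · simp
    · exact Finset.sum_congr rfl fun i _ =>
        integral_map (hiter i).aemeasurable hg.aestronglyMeasurable
  -- integrals of f ∘ T against the averages converge to ∫ f dμ
  have hφtop : Tendsto (fun k => (φ k : ℝ)) atTop atTop :=
    tendsto_natCast_atTop_atTop.comp hφ.tendsto_atTop
  have hdiffT : ∀ f : C(X, ℝ),
      Tendsto (fun k => ∫ x, f (T x) ∂(νbar (φ k))) atTop (nhds (∫ x, f x ∂μ)) := by
    intro f
    set a : ℕ → ℝ := fun i => ∫ x, f (T^[i] x) ∂ν₀ with ha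
    have hfb : ∀ x, ‖f x‖ ≤ ‖f‖ := fun x => f.norm_coe_le_norm x
    have hfTmeas : Measurable (fun x => f (T x)) := f.continuous.measurable.comp hTmeas
    have hfmeas : Measurable (f : X → ℝ) := f.continuous.measurable
    have key : ∀ n : ℕ, 1 ≤ n →
        ∫ x, f (T x) ∂(νbar n) = ∫ x, f x ∂(νbar n) + (n : ℝ)⁻¹ * (a n - a 0) := by
      intro n hn
      have h1 := havg n hn (fun x => f (T x)) hfTmeas ‖f‖ (fun x => hfb _)
      have h2 := havg n hn f hfmeas ‖f‖ hfb
      have h3 : ∀ i : ℕ, (∫ x, f (T (T^[i] x)) ∂ν₀) = a (i + 1) := by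
        intro i
        simp only [ha, Function.iterate_succ_apply']
      rw [h1, h2]
      have h4 : ∑ i ∈ Finset.range n, ∫ x, f (T (T^[i] x)) ∂ν₀
          = ∑ i ∈ Finset.range n, a (i + 1) := Finset.sum_congr rfl fun i _ => h3 i
      rw [h4]
      have htel : ∑ i ∈ Finset.range n, a (i + 1)
          = ∑ i ∈ Finset.range n, a i + (a n - a 0) := by
        have h5 := Finset.sum_range_sub a n
        rw [Finset.sum_sub_distrib] at h5
        linarith
      rw [htel]; ring
    have habd : ∀ i, |a i| ≤ ‖f‖ := by
      intro i
      have h1 : ‖∫ x, f (T^[i] x) ∂ν₀‖ ≤ ‖f‖ * (ν₀ univ).toReal :=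
        norm_integral_le_of_norm_le_const (ae_of_all _ fun x => hfb _)
      simpa [measure_univ] using h1
    have herr : Tendsto (fun k => ((φ k : ℝ))⁻¹ * (a (φ k) - a 0)) atTop (nhds 0) := by
      refine squeeze_zero_norm (a := fun k => (φ k : ℝ)⁻¹ * (2 * ‖f‖)) (fun k => ?_) ?_
      · 
        rw [norm_mul, norm_inv, Real.norm_natCast]
        apply mul_le_mul_of_nonneg_left _ (by positivity)
        calc ‖a (φ k) - a 0‖ ≤ |a (φ k)| + |a 0| := abs_sub _ _
          _ ≤ 2 * ‖f‖ := by linarith [habd (φ k), habd 0]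
      · have := (hφtop.inv_tendsto_atTop).mul_const (2 * ‖f‖)
        simpa using this
    have := (hconv f).add herr
    rw [add_zero] at this
    exact this.congr fun k => (key (φ k) (hφ1 k)).symm
  -- weak convergence in the space of probability measures
  haveI : ∀ k : ℕ, IsProbabilityMeasure (νbar (φ k)) := fun k => hprob _ (hφ1 k)
  let P : ℕ → ProbabilityMeasure X := fun k => ⟨νbar (φ k), hprob _ (hφ1 k)⟩
  let Q : ProbabilityMeasure X := ⟨μ, inferInstance⟩
  have hPQ : Tendsto P atTop (nhds Q) := by
    rw [ProbabilityMeasure.tendsto_iff_forall_integral_tendsto]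
    intro f
    exact hconv ⟨f, f.continuous⟩
  -- the M_{S,c} bound for μ
  have hb : ∀ ξ : ℝ, 0 < ξ →
      μ {x | Metric.infDist x S ≤ ξ} ≤ ENNReal.ofReal (c * ξ) := by
    intro ξ hξ
    have step : ∀ ξ' : ℝ, ξ < ξ' →
        μ {x | Metric.infDist x S ≤ ξ} ≤ ENNReal.ofReal (c * ξ') := by
      intro ξ' hξ'
      have hopen : IsOpen {x : X | Metric.infDist x S < ξ'} :=
        isOpen_lt (Metric.continuous_infDist_pt S) continuous_const
      have h1 : μ {x | Metric.infDist x S ≤ ξ} ≤ μ {x : X | Metric.infDist x S < ξ'} :=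
        measure_mono fun x hx => lt_of_le_of_lt hx hξ'
      have h2 : μ {x : X | Metric.infDist x S < ξ'} ≤
          atTop.liminf fun k => νbar (φ k) {x : X | Metric.infDist x S < ξ'} :=
        ProbabilityMeasure.le_liminf_measure_open_of_tendsto hPQ hopen
      have h3 : (atTop.liminf fun k => νbar (φ k) {x : X | Metric.infDist x S < ξ'})
          ≤ ENNReal.ofReal (c * ξ') := by
        calc (atTop.liminf fun k => νbar (φ k) {x : X | Metric.infDist x S < ξ'})
            ≤ atTop.liminf (fun _ : ℕ => ENNReal.ofReal (c * ξ')) := by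
              exact Filter.liminf_le_liminf <| Eventually.of_forall fun k =>
                le_trans (measure_mono (show {x : X | Metric.infDist x S < ξ'} ⊆
                  {x | Metric.infDist x S ≤ ξ'} from fun x hx => show Metric.infDist x S ≤ ξ' from le_of_lt hx))
                  (hM (φ k) (hφ1 k) ξ' (lt_trans hξ hξ'))
          _ = ENNReal.ofReal (c * ξ') := liminf_const _
      exact le_trans h1 (le_trans h2 h3)
    have htends : Tendsto (fun m : ℕ => ENNReal.ofReal (c * (ξ + 1 / ((m : ℝ) + 1)))) atTop
        (nhds (ENNReal.ofReal (c * ξ))) := by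
      apply ENNReal.tendsto_ofReal
      have h1 : Tendsto (fun m : ℕ => ξ + 1 / ((m : ℝ) + 1)) atTop (nhds (ξ + 0)) :=
        tendsto_const_nhds.add tendsto_one_div_add_atTop_nhds_zero_nat
      rw [add_zero] at h1
      exact h1.const_mul c
    exact ge_of_tendsto' htends fun m => step _ (lt_add_of_pos_right ξ (by positivity))
  -- the key invariance identity
  have keyT : ∀ f : C(X, ℝ), ∫ x, f (T x) ∂μ = ∫ x, f x ∂μ := by
    intro f
    have hfb : ∀ x, ‖f x‖ ≤ ‖f‖ := fun x => f.norm_coe_le_norm x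
    have hfTmeas : Measurable (fun x => f (T x)) := f.continuous.measurable.comp hTmeas
    have hnorm : (0 : ℝ) ≤ ‖f‖ := norm_nonneg f
    have hd : ∀ ξ : ℝ, 0 < ξ →
        |∫ x, f (T x) ∂μ - ∫ x, f x ∂μ| ≤ 4 * c * ‖f‖ * ξ := by
      intro ξ hξ
      set ψ : X → ℝ := fun x => min 1 (max (Metric.infDist x S / ξ - 1) 0) with hψdef
      have hψcont : Continuous ψ := continuous_const.min
        ((((Metric.continuous_infDist_pt S).div_const ξ).sub continuous_const).max
          continuous_const)
      have hψ01 : ∀ x, 0 ≤ ψ x ∧ ψ x ≤ 1 := fun x =>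
        ⟨le_min zero_le_one (le_max_right _ _), min_le_left _ _⟩
      have hψ0 : ∀ x, Metric.infDist x S < ξ → ψ x = 0 := by
        intro x hx
        have h1 : Metric.infDist x S / ξ - 1 ≤ 0 := by
          rw [sub_nonpos, div_le_one hξ]; exact le_of_lt hx
        simp only [hψdef, max_eq_right h1, min_eq_right zero_le_one]
      have hψ1 : ∀ x, ¬(Metric.infDist x S ≤ 2 * ξ) → ψ x = 1 := by
        intro x hx
        push_neg at hx
        have h1 : (1 : ℝ) ≤ Metric.infDist x S / ξ - 1 := by
          rw [le_sub_iff_add_le, le_div_iff₀ hξ]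
          linarith
        exact min_eq_left (le_trans h1 (le_max_left _ _))
      have hGcont : Continuous fun x => f (T x) * ψ x := by
        rw [continuous_iff_continuousAt]
        intro x
        by_cases hx : x ∈ S
        · have hx0 : Metric.infDist x S = 0 := Metric.infDist_zero_of_mem hx
          have hopen : IsOpen {y : X | Metric.infDist y S < ξ} :=
            isOpen_lt (Metric.continuous_infDist_pt S) continuous_const
          have hmem : x ∈ {y : X | Metric.infDist y S < ξ} := by
            simp only [mem_setOf_eq, hx0]; exact hξ
          have hev : (fun _ : X => (0 : ℝ)) =ᶠ[nhds x] fun y => f (T y) * ψ y := by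
            filter_upwards [hopen.mem_nhds hmem] with y hy
            rw [hψ0 y hy, mul_zero]
          exact continuousAt_const.congr hev
        · exact (f.continuous.continuousAt.comp (hTcont x hx)).mul hψcont.continuousAt
      set G : C(X, ℝ) := ⟨fun x => f (T x) * ψ x, hGcont⟩ with hGdef
      have hGmeas : Measurable fun x => f (T x) * ψ x := hfTmeas.mul hψcont.measurable
      have hGb : ∀ x, ‖f (T x) * ψ x‖ ≤ ‖f‖ := by
        intro x
        rw [norm_mul]
        calc ‖f (T x)‖ * ‖ψ x‖ ≤ ‖f‖ * 1 := by
              apply mul_le_mul (hfb _) _ (norm_nonneg _) hnorm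
              rw [Real.norm_eq_abs, abs_le]
              exact ⟨by linarith [(hψ01 x).1], (hψ01 x).2⟩
          _ = ‖f‖ := mul_one _
      have hbound : ∀ ν : Measure X, IsProbabilityMeasure ν →
          ν {x | Metric.infDist x S ≤ 2 * ξ} ≤ ENNReal.ofReal (c * (2 * ξ)) →
          |∫ x, f (T x) ∂ν - ∫ x, G x ∂ν| ≤ ‖f‖ * (c * (2 * ξ)) := by
        intro ν hν hνF
        have hint1 : Integrable (fun x => f (T x)) ν :=
          hbdd_int _ hfTmeas ‖f‖ (fun x => hfb _) ν inferInstance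
        have hint2 : Integrable (fun x => f (T x) * ψ x) ν :=
          hbdd_int _ hGmeas ‖f‖ hGb ν inferInstance
        have hGc : ∀ x, G x = f (T x) * ψ x := fun x => rfl
        simp only [hGc]
        rw [← integral_sub hint1 hint2]
        calc |∫ x, (f (T x) - f (T x) * ψ x) ∂ν|
            ≤ ∫ x, Set.indicator {x | Metric.infDist x S ≤ 2 * ξ} (fun _ => ‖f‖) x ∂ν := by
              rw [← Real.norm_eq_abs]
              refine (norm_integral_le_integral_norm _).trans ?_
              refine integral_mono (hint1.sub hint2).norm
                ((integrable_const ‖f‖).indicator (hFmeas (2 * ξ))) ?_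
              intro x
              dsimp only
              by_cases hx : x ∈ {x : X | Metric.infDist x S ≤ 2 * ξ}
              · rw [Set.indicator_of_mem hx]
                have heq : f (T x) - f (T x) * ψ x = f (T x) * (1 - ψ x) := by ring
                rw [heq, norm_mul]
                calc ‖f (T x)‖ * ‖1 - ψ x‖ ≤ ‖f‖ * 1 := by
                      apply mul_le_mul (hfb _) _ (norm_nonneg _) hnorm
                      rw [Real.norm_eq_abs, abs_le]
                      constructor <;> [linarith [(hψ01 x).2]; linarith [(hψ01 x).1]]
                  _ = ‖f‖ := mul_one _
              · rw [Set.indicator_of_notMem hx, hψ1 x hx]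
                simp
          _ = (ν {x | Metric.infDist x S ≤ 2 * ξ}).toReal * ‖f‖ := by
              rw [integral_indicator_const _ (hFmeas (2 * ξ))]
              rw [smul_eq_mul]
              rfl
          _ ≤ (c * (2 * ξ)) * ‖f‖ := by
              apply mul_le_mul_of_nonneg_right _ hnorm
              have h6 := ENNReal.toReal_mono ENNReal.ofReal_ne_top hνF
              rwa [ENNReal.toReal_ofReal (by positivity)] at h6
          _ = ‖f‖ * (c * (2 * ξ)) := mul_comm _ _
      have hμb := hbound μ inferInstance (hb (2 * ξ) (by positivity))
      have hνk : ∀ k, |∫ x, f (T x) ∂(νbar (φ k)) - ∫ x, G x ∂(νbar (φ k))|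
          ≤ ‖f‖ * (c * (2 * ξ)) :=
        fun k => hbound _ (hprob _ (hφ1 k)) (hM (φ k) (hφ1 k) (2 * ξ) (by positivity))
      have hGlim : Tendsto (fun k => ∫ x, G x ∂(νbar (φ k))) atTop (nhds (∫ x, G x ∂μ)) :=
        hconv G
      have hTlim := hdiffT f
      have h5 : |∫ x, f x ∂μ - ∫ x, G x ∂μ| ≤ ‖f‖ * (c * (2 * ξ)) := by
        have htnd : Tendsto
            (fun k => |∫ x, f (T x) ∂(νbar (φ k)) - ∫ x, G x ∂(νbar (φ k))|) atTop
            (nhds |∫ x, f x ∂μ - ∫ x, G x ∂μ|) := (hTlim.sub hGlim).abs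
        exact le_of_tendsto htnd (Eventually.of_forall hνk)
      calc |∫ x, f (T x) ∂μ - ∫ x, f x ∂μ|
          ≤ |∫ x, f (T x) ∂μ - ∫ x, G x ∂μ| + |∫ x, G x ∂μ - ∫ x, f x ∂μ| :=
            abs_sub_le _ _ _
        _ ≤ ‖f‖ * (c * (2 * ξ)) + ‖f‖ * (c * (2 * ξ)) :=
            add_le_add hμb (by rwa [abs_sub_comm])
        _ = 4 * c * ‖f‖ * ξ := by ring
    have habs : |∫ x, f (T x) ∂μ - ∫ x, f x ∂μ| ≤ 0 := by
      refine le_of_forall_pos_le_add ?_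
      intro ε hε
      have hK : (0 : ℝ) < 4 * c * ‖f‖ + 1 := by positivity
      have hξ : 0 < ε / (4 * c * ‖f‖ + 1) := by positivity
      calc |∫ x, f (T x) ∂μ - ∫ x, f x ∂μ| ≤ 4 * c * ‖f‖ * (ε / (4 * c * ‖f‖ + 1)) :=
            hd _ hξ
        _ ≤ (4 * c * ‖f‖ + 1) * (ε / (4 * c * ‖f‖ + 1)) :=
            mul_le_mul_of_nonneg_right (by linarith) (le_of_lt hξ)
        _ = ε := mul_div_cancel₀ ε hK.ne'
        _ ≤ 0 + ε := by linarith
    have := abs_nonpos_iff.mp habs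
    linarith [sub_eq_zero.mp (abs_nonpos_iff.mp habs)]
  -- invariance of μ
  have hinv : μ.map T = μ := by
    haveI : IsProbabilityMeasure (μ.map T) := Measure.isProbabilityMeasure_map hTmeas.aemeasurable
    apply ext_of_forall_lintegral_eq_of_IsFiniteMeasure
    intro f
    have hfc : Continuous fun x => (f x : ℝ) :=
      NNReal.continuous_coe.comp f.continuous
    set g : C(X, ℝ) := ⟨fun x => (f x : ℝ), hfc⟩ with hgdef
    have hgb : ∀ x, ‖g x‖ ≤ ‖g‖ := fun x => g.norm_coe_le_norm x
    have hint1 : Integrable (fun x => (f (T x) : ℝ)) μ :=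
      hbdd_int _ (hfc.measurable.comp hTmeas) ‖g‖ (fun x => hgb (T x)) μ inferInstance
    have hint2 : Integrable (fun x => (f x : ℝ)) μ :=
      hbdd_int _ hfc.measurable ‖g‖ hgb μ inferInstance
    rw [lintegral_map (f.continuous.measurable.coe_nnreal_ennreal) hTmeas,
      lintegral_coe_eq_integral _ hint1, lintegral_coe_eq_integral _ hint2]
    congr 1
    exact keyT g
  exact ⟨⟨hinv, hb⟩, μ, inferInstance, hinv, hb⟩
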